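/- Let λ, μ be partitions of length n, set m = max(λ_1, μ_1), λ̂ = (m−λ_n, m−λ_{n−1}, …, m−λ_1) and μ̂ = (m−μ_n, …, m−μ_1) (these are partitions of length n). Then U_{λ,μ}(q) = K̃^{C_n}_{λ̂,μ̂}(q). -/
import Mathlib


open Finset Polynomial

noncomputable section

/-- The standard basis vector `ε_i` of `ℤ^n`. -/
def eps (n : ℕ) (i : Fin n) : Fin n → ℤ := Pi.single i 1

/-- Pairs `(i,j)` with `i < j`. -/
def pairsLt (n : ℕ) : Finset (Fin n × Fin n) :=
  Finset.univ.filter fun p => p.1 < p.2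

/-- Pairs `(i,j)` with `i ≤ j`. -/
def pairsLe (n : ℕ) : Finset (Fin n × Fin n) :=
  Finset.univ.filter fun p => p.1 ≤ p.2

/-- Positive roots of type `A_{n-1}`: the `ε_i - ε_j`, `i < j`. -/
def RA (n : ℕ) : Finset (Fin n → ℤ) :=
  (pairsLt n).image fun p => eps n p.1 - eps n p.2

/-- Positive roots of type `D_n`: the `ε_i - ε_j` and `ε_i + ε_j`, `i < j`. -/
def RD (n : ℕ) : Finset (Fin n → ℤ) :=
  RA n ∪ ((pairsLt n).image fun p => eps n p.1 + eps n p.2)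

/-- Positive roots of type `C_n`: those of `D_n` together with the `2ε_i`. -/
def RC (n : ℕ) : Finset (Fin n → ℤ) :=
  RD n ∪ (Finset.univ.image fun i : Fin n => (2 : ℤ) • eps n i)

/-- Positive roots of type `B_n`: those of `D_n` together with the `ε_i`. -/
def RB (n : ℕ) : Finset (Fin n → ℤ) :=
  RD n ∪ (Finset.univ.image fun i : Fin n => eps n i)

/-- The `q`-partition function attached to a finite set `R` of positive roots:
`P_q(β) = Σ_m q^{Σ_α m(α)}`, the sum over the (finitely many) functions
`m : R → ℕ` with `Σ_α m(α)·α = β`. -/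
def Pq (n : ℕ) (R : Finset (Fin n → ℤ)) (β : Fin n → ℤ) : Polynomial ℤ :=
  ∑ᶠ m ∈ {m : (Fin n → ℤ) → ℕ |
      (∀ α, α ∉ R → m α = 0) ∧ ∑ α ∈ R, m α • α = β},
    (X : Polynomial ℤ) ^ ∑ α ∈ R, m α

/-- `ρ_n = (n, n-1, ..., 1)`. -/
def rho (n : ℕ) : Fin n → ℤ := fun i => (n : ℤ) - ((i : ℕ) : ℤ)

/-- `ρ_{D_n} = (n-1, n-2, ..., 0)`. -/
def rhoD (n : ℕ) : Fin n → ℤ := fun i => (n : ℤ) - ((i : ℕ) : ℤ) - 1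

/-- The restricted alternating sum `K̃_{λ,μ}(q) = Σ_{σ ∈ S_n} sgn(σ) P_q(σ(λ+ρ_n) - (μ+ρ_n))`
attached to a set `R` of positive roots.  For `R = RA n` this is the type `A_{n-1}`
Kostka-Foulkes polynomial `K^{A_{n-1}}_{λ,μ}(q)`. -/
def KT (n : ℕ) (R : Finset (Fin n → ℤ)) (lam mu : Fin n → ℤ) : Polynomial ℤ :=
  ∑ σ : Equiv.Perm (Fin n),
    (Equiv.Perm.sign σ : ℤ) •
      Pq n R (fun i => (lam + rho n) (σ i) - (mu + rho n) i)

/-- The type `C_n` Kostka-Foulkes polynomial: the alternating sum over the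
hyperoctahedral group `W_{C_n}` (signed permutations, a signed permutation being
encoded as a pair `(σ, e)` acting by `v ↦ (i ↦ e i * v (σ i))`, whose determinant
is `sgn(σ) * ∏ i, e i`), with `ρ_{C_n} = ρ_n`. -/
def KC (n : ℕ) (lam mu : Fin n → ℤ) : Polynomial ℤ :=
  ∑ σ : Equiv.Perm (Fin n), ∑ e : Fin n → ℤˣ,
    ((Equiv.Perm.sign σ : ℤ) * ∏ i, (e i : ℤ)) •
      Pq n (RC n) (fun i => (e i : ℤ) * (lam + rho n) (σ i) - (mu + rho n) i)

/-- The type `D_n` Kostka-Foulkes polynomial: the alternating sum over `W_{D_n}`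
(signed permutations with an even number of sign changes), with `ρ_{D_n} = (n-1, ..., 0)`. -/
def KD (n : ℕ) (lam mu : Fin n → ℤ) : Polynomial ℤ :=
  ∑ σ : Equiv.Perm (Fin n),
    ∑ e ∈ Finset.univ.filter (fun e : Fin n → ℤˣ => ∏ i, e i = 1),
      ((Equiv.Perm.sign σ : ℤ) * ∏ i, (e i : ℤ)) •
        Pq n (RD n) (fun i => (e i : ℤ) * (lam + rhoD n) (σ i) - (mu + rhoD n) i)

/-- `c(δ)`: the number of families `(e_{rs})_{1 ≤ r ≤ s ≤ n}` of nonnegative integers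
with `Σ_{r ≤ s} e_{rs} (ε_r + ε_s) = δ`. -/
def cC (n : ℕ) (δ : Fin n → ℤ) : ℕ :=
  Set.ncard {e : Fin n × Fin n → ℕ |
    (∀ p, p ∉ pairsLe n → e p = 0) ∧
    ∑ p ∈ pairsLe n, e p • (eps n p.1 + eps n p.2) = δ}

/-- `d(δ)`: the number of families `(e_{rs})_{1 ≤ r < s ≤ n}` of nonnegative integers
with `Σ_{r < s} e_{rs} (ε_r + ε_s) = δ`. -/
def dD (n : ℕ) (δ : Fin n → ℤ) : ℕ :=
  Set.ncard {e : Fin n × Fin n → ℕ |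
    (∀ p, p ∉ pairsLt n → e p = 0) ∧
    ∑ p ∈ pairsLt n, e p • (eps n p.1 + eps n p.2) = δ}

/-- `f_q(β)`: the coefficient of `x^β` in
`∏_{i<j} (1 - q x_i/x_j)⁻¹ ∏_{r<s} (1 - q/(x_r x_s))⁻¹`, i.e. the sum of
`q^{Σ a + Σ b}` over families `a = (a_{ij})_{i<j}`, `b = (b_{rs})_{r<s}` of
nonnegative integers with `Σ a_{ij}(ε_i - ε_j) - Σ b_{rs}(ε_r + ε_s) = β`. -/
def fq (n : ℕ) (β : Fin n → ℤ) : Polynomial ℤ :=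
  ∑ᶠ ab ∈ {ab : ((Fin n × Fin n) → ℕ) × ((Fin n × Fin n) → ℕ) |
      (∀ p, p ∉ pairsLt n → ab.1 p = 0) ∧ (∀ p, p ∉ pairsLt n → ab.2 p = 0) ∧
      ((∑ p ∈ pairsLt n, ab.1 p • (eps n p.1 - eps n p.2)) -
        ∑ p ∈ pairsLt n, ab.2 p • (eps n p.1 + eps n p.2)) = β},
    (X : Polynomial ℤ) ^ ((∑ p ∈ pairsLt n, ab.1 p) + ∑ p ∈ pairsLt n, ab.2 p)

/-- `F_q(β)`: the coefficient of `x^β` in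
`∏_{i<j} (1 - q x_i/x_j)⁻¹ ∏_{r≤s} (1 - q/(x_r x_s))⁻¹`, i.e. the sum of
`q^{Σ a + Σ b}` over families `a = (a_{ij})_{i<j}`, `b = (b_{rs})_{r≤s}` of
nonnegative integers with `Σ a_{ij}(ε_i - ε_j) - Σ b_{rs}(ε_r + ε_s) = β`. -/
def Fq (n : ℕ) (β : Fin n → ℤ) : Polynomial ℤ :=
  ∑ᶠ ab ∈ {ab : ((Fin n × Fin n) → ℕ) × ((Fin n × Fin n) → ℕ) |
      (∀ p, p ∉ pairsLt n → ab.1 p = 0) ∧ (∀ p, p ∉ pairsLe n → ab.2 p = 0) ∧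
      ((∑ p ∈ pairsLt n, ab.1 p • (eps n p.1 - eps n p.2)) -
        ∑ p ∈ pairsLe n, ab.2 p • (eps n p.1 + eps n p.2)) = β},
    (X : Polynomial ℤ) ^ ((∑ p ∈ pairsLt n, ab.1 p) + ∑ p ∈ pairsLe n, ab.2 p)

/-- The `q`-multiplicity `u_{λ,μ}(q) = Σ_{σ ∈ S_n} sgn(σ) f_q(σ(λ+ρ_n) - (μ+ρ_n))`. -/
def uP (n : ℕ) (lam mu : Fin n → ℤ) : Polynomial ℤ :=
  ∑ σ : Equiv.Perm (Fin n),
    (Equiv.Perm.sign σ : ℤ) •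
      fq n (fun i => (lam + rho n) (σ i) - (mu + rho n) i)

/-- The `q`-multiplicity `U_{λ,μ}(q) = Σ_{σ ∈ S_n} sgn(σ) F_q(σ(λ+ρ_n) - (μ+ρ_n))`. -/
def UP (n : ℕ) (lam mu : Fin n → ℤ) : Polynomial ℤ :=
  ∑ σ : Equiv.Perm (Fin n),
    (Equiv.Perm.sign σ : ℤ) •
      Fq n (fun i => (lam + rho n) (σ i) - (mu + rho n) i)

/-- `1_ℕ(β) = 1` if all coordinates of `β` are nonnegative, and `0` otherwise. -/
def indNat (n : ℕ) (v : Fin n → ℤ) : ℤ := if ∀ i, 0 ≤ v i then 1 else 0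

/-- The branching coefficient `b_{λ,ν} = Σ_{σ ∈ S_n} sgn(σ) 1_ℕ(σ(λ+ρ_n) - (ν+ρ_n))`. -/
def bcoef (n : ℕ) (lam nu : Fin n → ℤ) : ℤ :=
  ∑ σ : Equiv.Perm (Fin n),
    (Equiv.Perm.sign σ : ℤ) *
      indNat n (fun i => (lam + rho n) (σ i) - (nu + rho n) i)

/-- The coefficient of `q^j` (for `j : ℤ`) in a polynomial: `0` for negative `j`. -/
def zcoeff (p : Polynomial ℤ) (j : ℤ) : ℤ := if 0 ≤ j then p.coeff j.toNat else 0

/-- The conjugate partition, padded with zeros to length `n`: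
`λ'_i = #{j : λ_j ≥ i}` (for the `i`-th coordinate, `i = 1, ..., n`). -/
def conj (n : ℕ) (lam : Fin n → ℤ) : Fin n → ℤ :=
  fun i => ((Finset.univ.filter fun j : Fin n => ((i : ℕ) : ℤ) + 1 ≤ lam j).card : ℤ)

end

namespace Stmt12
variable {n : ℕ}

lemma mem_pairsLt {p : Fin n × Fin n} : p ∈ pairsLt n ↔ p.1 < p.2 := by
  simp [pairsLt]

lemma mem_pairsLe {p : Fin n × Fin n} : p ∈ pairsLe n ↔ p.1 ≤ p.2 := by
  simp [pairsLe]

lemma eps_apply (i k : Fin n) : eps n i k = if k = i then 1 else 0 := Pi.single_apply i 1 k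

lemma eps_rev (x i : Fin n) : eps n x.rev i = eps n x i.rev := by
  simp only [eps_apply]
  congr 1
  simp only [eq_iff_iff]
  constructor
  · rintro rfl; simp [Fin.rev_rev]
  · intro h; rw [← h, Fin.rev_rev]

def sr (p : Fin n × Fin n) : Fin n × Fin n := (p.2.rev, p.1.rev)

lemma sr_sr (p : Fin n × Fin n) : sr (sr p) = p := by
  simp [sr, Fin.rev_rev]

lemma sr_mem_lt {p : Fin n × Fin n} (hp : p ∈ pairsLt n) : sr p ∈ pairsLt n := by
  rw [mem_pairsLt] at hp ⊢
  exact Fin.rev_lt_rev.mpr hp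

lemma sr_mem_le {p : Fin n × Fin n} (hp : p ∈ pairsLe n) : sr p ∈ pairsLe n := by
  rw [mem_pairsLe] at hp ⊢
  exact Fin.rev_le_rev.mpr hp

lemma sum_sr {M : Type*} [AddCommMonoid M] (s : Finset (Fin n × Fin n))
    (hs : ∀ p ∈ s, sr p ∈ s) (f : Fin n × Fin n → M) :
    ∑ p ∈ s, f (sr p) = ∑ p ∈ s, f p :=
  Finset.sum_nbij' sr sr hs hs (fun p _ => sr_sr p) (fun p _ => sr_sr p) (fun _ _ => rfl)

lemma rA_inj {p q : Fin n × Fin n} (hp : p.1 < p.2) (hq : q.1 < q.2)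
    (h : eps n p.1 - eps n p.2 = eps n q.1 - eps n q.2) : p = q := by
  obtain ⟨a, b⟩ := p; obtain ⟨c, d⟩ := q
  simp only at hp hq h ⊢
  have hab : ¬ (a = b) := hp.ne
  have hcd : ¬ (c = d) := hq.ne
  have hac : a = c := by
    by_contra hne
    have h1 := congrFun h a
    simp only [Pi.sub_apply, eps_apply, if_pos rfl, if_neg hab,
      if_neg hne] at h1
    split_ifs at h1 <;> omega
  subst hac
  have hbd : b = d := by
    by_contra hne
    have h1 := congrFun h b
    simp only [Pi.sub_apply, eps_apply, if_pos rfl, if_neg (Ne.symm hab),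
      if_neg hne] at h1
    split_ifs at h1 <;> omega
  simp [hbd]

lemma rC_inj {p q : Fin n × Fin n} (hp : p.1 ≤ p.2) (hq : q.1 ≤ q.2)
    (h : eps n p.1 + eps n p.2 = eps n q.1 + eps n q.2) : p = q := by
  obtain ⟨a, b⟩ := p; obtain ⟨c, d⟩ := q
  simp only at hp hq h ⊢
  have key : ∀ k : Fin n, (k = a ∨ k = b) ↔ (k = c ∨ k = d) := by
    intro k
    have hk := congrFun h k
    simp only [Pi.add_apply, eps_apply] at hk
    constructor
    · intro hor
      by_contra hnor
      push_neg at hnor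
      rw [if_neg hnor.1, if_neg hnor.2] at hk
      rcases hor with rfl | rfl <;> rw [if_pos rfl] at hk <;> split_ifs at hk <;> omega
    · intro hor
      by_contra hnor
      push_neg at hnor
      rw [if_neg hnor.1, if_neg hnor.2] at hk
      rcases hor with rfl | rfl <;> rw [if_pos rfl] at hk <;> split_ifs at hk <;> omega
  have h1 := (key a).mp (Or.inl rfl)
  have h2 := (key b).mp (Or.inr rfl)
  have h3 := (key c).mpr (Or.inl rfl)
  have h4 := (key d).mpr (Or.inr rfl)
  rw [Fin.le_def] at hp hq
  simp only [Prod.mk.injEq, Fin.ext_iff] at h1 h2 h3 h4 ⊢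
  omega

lemma rAC_ne {p q : Fin n × Fin n} (hp : p.1 < p.2) :
    eps n p.1 - eps n p.2 ≠ eps n q.1 + eps n q.2 := by
  intro h
  have h1 := congrFun h p.2
  have hne : ¬ (p.2 = p.1) := hp.ne'
  simp only [Pi.sub_apply, Pi.add_apply, eps_apply, if_pos rfl, if_neg hne] at h1
  split_ifs at h1 <;> omega

lemma memA {p : Fin n × Fin n} (hp : p ∈ pairsLt n) :
    eps n p.1 - eps n p.2 ∈ RC n := by
  simp only [RC, RD, RA, Finset.mem_union, Finset.mem_image]
  exact Or.inl (Or.inl ⟨p, hp, rfl⟩)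

lemma memC {p : Fin n × Fin n} (hp : p ∈ pairsLe n) :
    eps n p.1 + eps n p.2 ∈ RC n := by
  rw [mem_pairsLe] at hp
  rcases lt_or_eq_of_le hp with h | h
  · simp only [RC, RD, RA, Finset.mem_union, Finset.mem_image]
    exact Or.inl (Or.inr ⟨p, mem_pairsLt.mpr h, rfl⟩)
  · simp only [RC, RD, RA, Finset.mem_union, Finset.mem_image, Finset.mem_univ, true_and]
    refine Or.inr ⟨p.1, ?_⟩
    rw [two_smul, h]

lemma cover {α : Fin n → ℤ} (hα : α ∈ RC n) :
    (∃ p ∈ pairsLt n, α = eps n p.1 - eps n p.2) ∨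
    (∃ p ∈ pairsLe n, α = eps n p.1 + eps n p.2) := by
  simp only [RC, RD, RA, Finset.mem_union, Finset.mem_image, Finset.mem_univ, true_and] at hα
  rcases hα with (⟨p, hp, h⟩ | ⟨p, hp, h⟩) | ⟨i, h⟩
  · exact Or.inl ⟨p, hp, h.symm⟩
  · exact Or.inr ⟨p, mem_pairsLe.mpr (mem_pairsLt.mp hp).le, h.symm⟩
  · refine Or.inr ⟨(i, i), mem_pairsLe.mpr le_rfl, ?_⟩
    rw [← h, two_smul]

/-- The bijection from `F_q`-data to `P_q^C`-data. -/
def Phi (ab : ((Fin n × Fin n) → ℕ) × ((Fin n × Fin n) → ℕ)) : (Fin n → ℤ) → ℕ :=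
  fun α =>
    (∑ p ∈ pairsLt n, if eps n p.1 - eps n p.2 = α then ab.1 (sr p) else 0) +
    (∑ p ∈ pairsLe n, if eps n p.1 + eps n p.2 = α then ab.2 (sr p) else 0)

lemma Phi_apply_A (ab : ((Fin n × Fin n) → ℕ) × ((Fin n × Fin n) → ℕ))
    {p : Fin n × Fin n} (hp : p ∈ pairsLt n) :
    Phi ab (eps n p.1 - eps n p.2) = ab.1 (sr p) := by
  unfold Phi
  rw [Finset.sum_eq_single_of_mem p hp, if_pos rfl, Finset.sum_eq_zero, add_zero]
  · intro q hq
    exact if_neg (rAC_ne (mem_pairsLt.mp hp)).symm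
  · intro q hq hne
    rw [if_neg]
    intro h
    exact hne (rA_inj (mem_pairsLt.mp hq) (mem_pairsLt.mp hp) h)

lemma Phi_apply_C (ab : ((Fin n × Fin n) → ℕ) × ((Fin n × Fin n) → ℕ))
    {p : Fin n × Fin n} (hp : p ∈ pairsLe n) :
    Phi ab (eps n p.1 + eps n p.2) = ab.2 (sr p) := by
  unfold Phi
  rw [Finset.sum_eq_single_of_mem p hp, if_pos rfl, Finset.sum_eq_zero, zero_add]
  · intro q hq
    exact if_neg (rAC_ne (mem_pairsLt.mp hq))
  · intro q hq hne
    rw [if_neg]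
    intro h
    exact hne (rC_inj (mem_pairsLe.mp hq) (mem_pairsLe.mp hp) h)

lemma Phi_apply_nmem (ab : ((Fin n × Fin n) → ℕ) × ((Fin n × Fin n) → ℕ))
    {α : Fin n → ℤ} (hα : α ∉ RC n) : Phi ab α = 0 := by
  unfold Phi
  rw [Finset.sum_eq_zero, Finset.sum_eq_zero, add_zero]
  · intro q hq
    exact if_neg (fun h => hα (by rw [← h]; exact memC hq))
  · intro q hq
    exact if_neg (fun h => hα (by rw [← h]; exact memA hq))

lemma Phi_degree (ab : ((Fin n × Fin n) → ℕ) × ((Fin n × Fin n) → ℕ)) :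
    ∑ α ∈ RC n, Phi ab α = (∑ p ∈ pairsLt n, ab.1 p) + ∑ p ∈ pairsLe n, ab.2 p := by
  unfold Phi
  rw [Finset.sum_add_distrib, Finset.sum_comm, Finset.sum_comm (s := RC n) (t := pairsLe n)]
  congr 1
  · rw [← sum_sr (pairsLt n) (fun p hp => sr_mem_lt hp) ab.1]
    apply Finset.sum_congr rfl
    intro p hp
    rw [Finset.sum_ite_eq, if_pos (memA hp)]
  · rw [← sum_sr (pairsLe n) (fun p hp => sr_mem_le hp) ab.2]
    apply Finset.sum_congr rfl
    intro p hp
    rw [Finset.sum_ite_eq, if_pos (memC hp)]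

lemma Phi_weight (ab : ((Fin n × Fin n) → ℕ) × ((Fin n × Fin n) → ℕ)) :
    ∑ α ∈ RC n, Phi ab α • α
      = (∑ p ∈ pairsLt n, ab.1 (sr p) • (eps n p.1 - eps n p.2))
        + ∑ p ∈ pairsLe n, ab.2 (sr p) • (eps n p.1 + eps n p.2) := by
  unfold Phi
  simp only [add_smul, Finset.sum_smul, ite_smul, zero_smul]
  rw [Finset.sum_add_distrib, Finset.sum_comm, Finset.sum_comm (s := RC n) (t := pairsLe n)]
  congr 1
  · apply Finset.sum_congr rfl
    intro p hp
    rw [Finset.sum_ite_eq, if_pos (memA hp)]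
  · apply Finset.sum_congr rfl
    intro p hp
    rw [Finset.sum_ite_eq, if_pos (memC hp)]

lemma weight_rev (a b : (Fin n × Fin n) → ℕ) (i : Fin n) :
    ((∑ p ∈ pairsLt n, a (sr p) • (eps n p.1 - eps n p.2))
      + ∑ p ∈ pairsLe n, b (sr p) • (eps n p.1 + eps n p.2)) i
    = -(((∑ p ∈ pairsLt n, a p • (eps n p.1 - eps n p.2))
      - ∑ p ∈ pairsLe n, b p • (eps n p.1 + eps n p.2)) i.rev) := by
  simp only [Finset.sum_apply, Pi.add_apply, Pi.sub_apply, Pi.neg_apply, Pi.smul_apply]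
  simp only [nsmul_eq_mul]
  rw [← sum_sr (pairsLt n) (fun p hp => sr_mem_lt hp)
      (fun p => (a p : ℤ) * (eps n p.1 i.rev - eps n p.2 i.rev)),
    ← sum_sr (pairsLe n) (fun p hp => sr_mem_le hp)
      (fun p => (b p : ℤ) * (eps n p.1 i.rev + eps n p.2 i.rev))]
  have hA : ∀ p ∈ pairsLt n, ((a (sr p) : ℤ) * (eps n (sr p).1 i.rev - eps n (sr p).2 i.rev))
      = -((a (sr p) : ℤ) * (eps n p.1 i - eps n p.2 i)) := by
    intro p _
    show (a (sr p) : ℤ) * (eps n p.2.rev i.rev - eps n p.1.rev i.rev) = _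
    rw [eps_rev, eps_rev, Fin.rev_rev]
    ring
  have hB : ∀ p ∈ pairsLe n, ((b (sr p) : ℤ) * (eps n (sr p).1 i.rev + eps n (sr p).2 i.rev))
      = (b (sr p) : ℤ) * (eps n p.1 i + eps n p.2 i) := by
    intro p _
    show (b (sr p) : ℤ) * (eps n p.2.rev i.rev + eps n p.1.rev i.rev) = _
    rw [eps_rev, eps_rev, Fin.rev_rev]
    ring
  rw [Finset.sum_congr rfl hA, Finset.sum_congr rfl hB, Finset.sum_neg_distrib]
  ring

lemma Fq_eq_Pq (β : Fin n → ℤ) :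
    Fq n β = Pq n (RC n) (fun i => -β i.rev) := by
  unfold Fq Pq
  refine finsum_mem_eq_of_bijOn Phi ⟨?_, ?_, ?_⟩ ?_
  · -- MapsTo
    rintro ab ⟨ha, hb, hsum⟩
    refine ⟨fun α hα => Phi_apply_nmem ab hα, ?_⟩
    rw [Phi_weight]
    funext i
    rw [weight_rev ab.1 ab.2 i, hsum]
  · -- InjOn
    rintro ab ⟨ha, hb, -⟩ ab' ⟨ha', hb', -⟩ h
    refine Prod.ext (funext fun p => ?_) (funext fun p => ?_)
    · by_cases hp : p ∈ pairsLt n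
      · have h1 := congrFun h (eps n (sr p).1 - eps n (sr p).2)
        rwa [Phi_apply_A ab (sr_mem_lt hp), Phi_apply_A ab' (sr_mem_lt hp), sr_sr] at h1
      · rw [ha p hp, ha' p hp]
    · by_cases hp : p ∈ pairsLe n
      · have h1 := congrFun h (eps n (sr p).1 + eps n (sr p).2)
        rwa [Phi_apply_C ab (sr_mem_le hp), Phi_apply_C ab' (sr_mem_le hp), sr_sr] at h1
      · rw [hb p hp, hb' p hp]
  · -- SurjOn
    rintro m ⟨hm0, hmsum⟩
    set ab₀ : ((Fin n × Fin n) → ℕ) × ((Fin n × Fin n) → ℕ) :=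
      (fun p => if p ∈ pairsLt n then m (eps n (sr p).1 - eps n (sr p).2) else 0,
       fun p => if p ∈ pairsLe n then m (eps n (sr p).1 + eps n (sr p).2) else 0) with hab₀
    have key : Phi ab₀ = m := by
      funext α
      by_cases hα : α ∈ RC n
      · rcases cover hα with ⟨p, hp, rfl⟩ | ⟨p, hp, rfl⟩
        · rw [Phi_apply_A _ hp]
          show (if sr p ∈ pairsLt n then m (eps n (sr (sr p)).1 - eps n (sr (sr p)).2) else 0) = _
          rw [if_pos (sr_mem_lt hp), sr_sr]
        · rw [Phi_apply_C _ hp]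
          show (if sr p ∈ pairsLe n then m (eps n (sr (sr p)).1 + eps n (sr (sr p)).2) else 0) = _
          rw [if_pos (sr_mem_le hp), sr_sr]
      · rw [Phi_apply_nmem _ hα, hm0 α hα]
    have hw : (∑ p ∈ pairsLt n, ab₀.1 (sr p) • (eps n p.1 - eps n p.2))
        + ∑ p ∈ pairsLe n, ab₀.2 (sr p) • (eps n p.1 + eps n p.2)
        = fun i => -β i.rev := by
      rw [← Phi_weight, key]
      exact hmsum
    refine ⟨ab₀, ⟨fun p hp => if_neg hp, fun p hp => if_neg hp, ?_⟩, key⟩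
    funext j
    have h1 := congrFun hw j.rev
    rw [weight_rev ab₀.1 ab₀.2 j.rev, Fin.rev_rev] at h1
    exact neg_injective h1
  · rintro ab ⟨ha, hb, hsum⟩
    rw [Phi_degree]

lemma hat_add_rho (c : ℤ) (v : Fin n → ℤ) (j : Fin n) :
    ((fun i : Fin n => c - v i.rev) + rho n) j = (c + n + 1) - (v + rho n) j.rev := by
  simp only [Pi.add_apply, rho]
  have h1 : (j.rev : ℕ) = n - ((j : ℕ) + 1) := Fin.val_rev j
  have h2 : (j : ℕ) < n := j.isLt
  have h3 : ((j.rev : ℕ) : ℤ) = (n : ℤ) - 1 - ((j : ℕ) : ℤ) := by omega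
  rw [h3]
  ring
end Stmt12


/-- for partitions `λ, μ` of length `n`, with `m = max(λ_1, μ_1)`,
`λ̂ = (m-λ_n, ..., m-λ_1)` and `μ̂ = (m-μ_n, ..., m-μ_1)`, one has
`U_{λ,μ}(q) = K̃^{C_n}_{λ̂,μ̂}(q)`. -/
theorem U_eq_KtildeC_dual (n : ℕ) (hn : 0 < n) (lam mu : Fin n → ℤ)
    (hlam : Antitone lam) (hlam0 : ∀ i, 0 ≤ lam i)
    (hmu : Antitone mu) (hmu0 : ∀ i, 0 ≤ mu i) :
    UP n lam mu =
      KT n (RC n)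
        (fun i => max (lam ⟨0, hn⟩) (mu ⟨0, hn⟩) - lam i.rev)
        (fun i => max (lam ⟨0, hn⟩) (mu ⟨0, hn⟩) - mu i.rev) := by
  unfold UP KT
  set M : ℤ := max (lam ⟨0, hn⟩) (mu ⟨0, hn⟩) with hM
  set r : Equiv.Perm (Fin n) := Fin.revPerm with hr
  refine Fintype.sum_equiv ((Equiv.mulLeft r).trans (Equiv.mulRight r)) _ _ (fun σ => ?_)
  have happ : ∀ i : Fin n, (((Equiv.mulLeft r).trans (Equiv.mulRight r)) σ) i = (σ i.rev).rev := by
    intro i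
    simp [hr, Equiv.Perm.mul_apply]
  have hsign : (Equiv.Perm.sign ((((Equiv.mulLeft r).trans (Equiv.mulRight r))) σ) : ℤ)
      = (Equiv.Perm.sign σ : ℤ) := by
    show ((Equiv.Perm.sign (r * σ * r) : ℤˣ) : ℤ) = _
    rw [map_mul, map_mul, mul_comm (Equiv.Perm.sign r) (Equiv.Perm.sign σ), mul_assoc,
      Int.units_mul_self, mul_one]
  rw [hsign, Stmt12.Fq_eq_Pq]
  congr 1
  congr 1
  funext i
  rw [happ i, Stmt12.hat_add_rho, Stmt12.hat_add_rho, Fin.rev_rev]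
  show -((lam + rho n) (σ i.rev) - (mu + rho n) i.rev) = _
  ring
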